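/- For every k ≥ 1, 𝒟¹_k ≠ 3 and 𝒟¹_k ≠ 5. -/

import Mathlib

open scoped Classical
open Filter

/-- The largest exponent appearing in the prime factorization of `N`
(`0` for `N = 0, 1`). -/
noncomputable def normInf (N : ℕ) : ℕ :=
  N.factorization.support.sup fun p => N.factorization p

/-- `L_∞(N) = ∑_{M=2}^N max(‖M‖_∞, ‖M-1‖_∞)`, with `L_∞(1) = 0`. -/
noncomputable def Linf (N : ℕ) : ℕ :=
  ∑ M ∈ Finset.Icc 2 N, max (normInf M) (normInf (M - 1))

/-- The `k`-th prime number, with `p_1 = 2`. -/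
noncomputable def primeSeq (k : ℕ) : ℕ := Nat.nth Nat.Prime (k - 1)

/-- `𝒟¹_k = L_∞(p_{k+1}) - L_∞(p_k)`. -/
noncomputable def D1 (k : ℕ) : ℕ := Linf (primeSeq (k + 1)) - Linf (primeSeq k)

lemma factorization_le_normInf {N p : ℕ} (hp : p.Prime) (hN : N ≠ 0) (h : p ∣ N) :
    N.factorization p ≤ normInf N :=
  Finset.le_sup (by
    rw [Nat.support_factorization, Nat.mem_primeFactors]; exact ⟨hp, h, hN⟩)

lemma one_le_normInf {N : ℕ} (h : 2 ≤ N) : 1 ≤ normInf N := by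
  have hp := Nat.minFac_prime (by omega : N ≠ 1)
  refine le_trans ?_ (factorization_le_normInf hp (by omega) (Nat.minFac_dvd N))
  exact (Nat.Prime.factorization_pos_of_dvd hp (by omega) (Nat.minFac_dvd N))

lemma two_le_normInf {N : ℕ} (hN : N ≠ 0) (h : 4 ∣ N) : 2 ≤ normInf N := by
  have h2 : (2:ℕ)^2 ∣ N := by norm_num; omega
  have h3 : 2 ≤ N.factorization 2 :=
    (Nat.Prime.pow_dvd_iff_le_factorization Nat.prime_two hN).mp h2
  exact le_trans h3 (factorization_le_normInf Nat.prime_two hN (dvd_trans (dvd_pow_self 2 two_ne_zero) h2))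

lemma normInf_prime {q : ℕ} (hq : q.Prime) : normInf q = 1 := by
  rw [normInf, hq.factorization, Finsupp.support_single_ne_zero _ one_ne_zero]
  simp

lemma Linf_eq (N : ℕ) :
    Linf N = ∑ M ∈ Finset.Ioc 1 N, max (normInf M) (normInf (M - 1)) := by
  rw [Linf, ← Finset.Icc_add_one_left_eq_Ioc]
  rfl

lemma Linf_split {p q : ℕ} (h1 : 1 ≤ p) (h2 : p ≤ q) :
    Linf q = Linf p + ∑ M ∈ Finset.Ioc p q, max (normInf M) (normInf (M - 1)) := by
  rw [Linf_eq, Linf_eq, Finset.sum_Ioc_consecutive _ h1 h2]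

theorem stmt_16 : ∀ k : ℕ, 1 ≤ k → D1 k ≠ 3 ∧ D1 k ≠ 5 := by
  intro k hk
  set p := primeSeq k with hp_def
  set q := primeSeq (k + 1) with hq_def
  have hp : p.Prime := Nat.prime_nth_prime _
  have hq : q.Prime := Nat.prime_nth_prime _
  have hpq : p < q := by
    rw [hp_def, hq_def, primeSeq, primeSeq]
    exact (Nat.nth_lt_nth Nat.infinite_setOf_prime).mpr (by omega)
  have hD : D1 k = ∑ M ∈ Finset.Ioc p q, max (normInf M) (normInf (M - 1)) := by
    rw [D1, ← hp_def, ← hq_def, Linf_split hp.one_lt.le hpq.le, Nat.add_sub_cancel_left]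
  rcases eq_or_lt_of_le hk with h1 | hk2
  · -- k = 1 : p = 2, q = 3
    have hp2 : p = 2 := by
      rw [hp_def, primeSeq, ← h1]; simp [Nat.nth_prime_zero_eq_two]
    have hq3 : q = 3 := by
      rw [hq_def, primeSeq, ← h1]; simp [Nat.nth_prime_one_eq_three]
    rw [hD, hp2, hq3]
    have : Finset.Ioc 2 3 = {3} := by decide
    rw [this, Finset.sum_singleton]
    have h3 : normInf 3 = 1 := normInf_prime Nat.prime_three
    have h2 : normInf (3 - 1) = 1 := normInf_prime Nat.prime_two
    rw [h3, h2]; omega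
  · -- k ≥ 2 : p and q are odd primes
    have hp3 : 3 ≤ p := by
      have h0 : (2 : ℕ) < p := by
        rw [hp_def, primeSeq]
        have := (Nat.nth_lt_nth Nat.infinite_setOf_prime).mpr
          (show 0 < k - 1 by omega)
        rwa [Nat.nth_prime_zero_eq_two] at this
      omega
    have hpo : p % 2 = 1 := Nat.odd_iff.mp (hp.odd_of_ne_two (by omega))
    have hqo : q % 2 = 1 := Nat.odd_iff.mp (hq.odd_of_ne_two (by omega))
    have hcase : q = p + 2 ∨ p + 4 ≤ q := by omega
    rcases hcase with h2 | h4
    · -- twin primes: D1 = 2 * normInf (p+1), even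
      rw [hD, h2]
      rw [show p + 2 = (p + 1) + 1 from rfl,
        Finset.sum_Ioc_succ_top (by omega : p ≤ p + 1),
        Finset.sum_Ioc_succ_top (le_refl p), Finset.Ioc_self,
        Finset.sum_empty]
      have e1 : normInf p = 1 := normInf_prime hp
      have e2 : normInf (p + 1 + 1) = 1 := by
        have := normInf_prime hq; rw [h2] at this; exact this
      have e3 : 1 ≤ normInf (p + 1) := one_le_normInf (by omega)
      rw [show p + 1 - 1 = p from rfl, show p + 1 + 1 - 1 = p + 1 from rfl,
        e1, e2]
      omega
    · -- gap at least 4 : D1 ≥ 6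
      set e := if p % 4 = 3 then p + 1 else p + 3 with he_def
      have he4 : 4 ∣ e := by rw [he_def]; split_ifs <;> omega
      have heb : p < e ∧ e + 1 ≤ q := by rw [he_def]; split_ifs <;> omega
      have hsub : ({e, e + 1} : Finset ℕ) ⊆ Finset.Ioc p q := by
        intro x hx
        simp only [Finset.mem_insert, Finset.mem_singleton] at hx
        rw [Finset.mem_Ioc]; omega
      have hne : 2 ≤ normInf e := two_le_normInf (by omega) he4
      have hte : 2 ≤ max (normInf e) (normInf (e - 1)) :=
        le_trans hne (le_max_left _ _)
      have hte1 : 2 ≤ max (normInf (e + 1)) (normInf (e + 1 - 1)) := by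
        rw [show e + 1 - 1 = e from rfl]
        exact le_trans hne (le_max_right _ _)
      have hrest : (Finset.Ioc p q \ {e, e + 1}).card ≤
          ∑ M ∈ Finset.Ioc p q \ {e, e + 1},
            max (normInf M) (normInf (M - 1)) := by
        have := Finset.card_nsmul_le_sum (Finset.Ioc p q \ {e, e + 1})
          (fun M => max (normInf M) (normInf (M - 1))) 1 ?_
        · simpa using this
        · intro x hx
          have hx' := Finset.mem_sdiff.mp hx
          have hxm := Finset.mem_Ioc.mp hx'.1
          exact le_trans (one_le_normInf (by omega)) (le_max_left _ _)
      have hcard : 2 ≤ (Finset.Ioc p q \ {e, e + 1}).card := by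
        rw [Finset.card_sdiff_of_subset hsub, Nat.card_Ioc]
        have : ({e, e + 1} : Finset ℕ).card = 2 := by
          rw [Finset.card_insert_of_notMem (by simp), Finset.card_singleton]
        omega
      have hsplit : ∑ M ∈ Finset.Ioc p q, max (normInf M) (normInf (M - 1)) =
          (∑ M ∈ Finset.Ioc p q \ {e, e + 1},
            max (normInf M) (normInf (M - 1))) +
          (∑ M ∈ ({e, e + 1} : Finset ℕ),
            max (normInf M) (normInf (M - 1))) :=
        (Finset.sum_sdiff hsub).symm
      have hpair : ∑ M ∈ ({e, e + 1} : Finset ℕ),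
          max (normInf M) (normInf (M - 1)) =
          max (normInf e) (normInf (e - 1)) +
          max (normInf (e + 1)) (normInf (e + 1 - 1)) :=
        Finset.sum_pair (by omega)
      rw [hD, hsplit, hpair]
      omega
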